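/- arXiv:2106.02601 — 2 statements merged into one kernel-verified Lean document; each statement's English description precedes it below -/
import Mathlib

section
/- Let a = x_0 < x_1 < ... < x_{p'} = b be a partition of the interval [a,b], let f_{p'} : [a,b] → ℝ be continuous and affine on each interval I_k = [x_{k-1}, x_k] (so f_{p'} is continuous piecewise linear with p' pieces of widths h_k = x_k - x_{k-1}), and let h_max be the maximum of the widths h_k. Let f_p : [a,b] → ℝ be continuous piecewise linear with p pieces, with slope L_j on its j-th piece, where p' ≤ p. Assume that for every k ∈ {1,...,p'}: (i) the interval I_k intersects the interiors of at most two consecutive pieces of f_p, and (ii) there exists a point z ∈ I_k at which f_p(z) = f_{p'}(z) and at which f_p and f_{p'} are both differentiable with equal derivative. Then the L¹ approximation error satisfies ∫_a^b |f_p(x) - f_{p'}(x)| dx ≤ (1/2) · h_max² · Σ_{k=1}^{p-1} |L_{k+1} - L_k|. -/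
lemma aux_affine_deriv_unique {f : ℝ → ℝ} {u v z c0 c1 m d : ℝ} (huv : u < v)
    (hz : z ∈ Set.Icc u v) (haff : ∀ y ∈ Set.Icc u v, f y = c0 + m * (y - c1))
    (hd : HasDerivAt f d z) : d = m := by
  have h2 : HasDerivAt (fun y => c0 + m * (y - c1)) m z := by
    simpa using (((hasDerivAt_id z).sub_const c1).const_mul m).const_add c0
  have h3 : HasDerivWithinAt f m (Set.Icc u v) z :=
    (h2.hasDerivWithinAt).congr haff (haff z hz)
  exact (uniqueDiffOn_Icc huv z hz).eq_deriv _ hd.hasDerivWithinAt h3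

lemma aux_piece_bound (u v : ℝ) (huv : u < v) (p : ℕ) (t : ℕ → ℝ)
    (htmono : ∀ j < p, t j < t (j + 1)) (ht0 : t 0 ≤ u) (htp : v ≤ t p)
    (fp fp' : ℝ → ℝ) (L : ℕ → ℝ) (Mk : ℝ)
    (hfpc : ContinuousOn fp (Set.Icc u v)) (hfp'c : ContinuousOn fp' (Set.Icc u v))
    (hfp'aff : ∀ y ∈ Set.Icc u v, fp' y = fp' u + Mk * (y - u))
    (hfpaff : ∀ j, 1 ≤ j → j ≤ p →
      ∀ y ∈ Set.Icc (t (j - 1)) (t j), fp y = fp (t (j - 1)) + L j * (y - t (j - 1)))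
    (hconsec : ∃ j, ∀ m, 1 ≤ m → m ≤ p →
      (Set.Ioo (t (m - 1)) (t m) ∩ Set.Icc u v).Nonempty → m = j ∨ m = j + 1)
    (htouch : ∃ z ∈ Set.Icc u v, fp z = fp' z ∧
      ∃ d : ℝ, HasDerivAt fp d z ∧ HasDerivAt fp' d z)
    (hmax : ℝ) (hmaxuv : v - u ≤ hmax) :
    ∫ y in u..v, |fp y - fp' y| ≤
      (1 / 2) * hmax ^ 2 *
        ∑ j ∈ (Finset.Icc 1 (p - 1)).filter (fun j => t j ∈ Set.Ioo u v),
          |L (j + 1) - L j| := by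
  classical
  have tle : ∀ i j : ℕ, i ≤ j → j ≤ p → t i ≤ t j := by
    intro i j hij hjp
    induction j with
    | zero => exact le_of_eq (by rw [Nat.le_zero.mp hij])
    | succ n ih =>
      rcases Nat.eq_or_lt_of_le hij with hh | hh
      · exact le_of_eq (by rw [hh])
      · exact le_trans (ih (by omega) (by omega)) (htmono n (by omega)).le
  have hppos : 1 ≤ p := by
    by_contra hp
    have : p = 0 := by omega
    subst this
    linarith
  obtain ⟨z, hz, hzeq, d, hdfp, hdfp'⟩ := htouch
  have hdM : d = Mk := aux_affine_deriv_unique huv hz hfp'aff hdfp'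
  -- relative affine form for fp'
  have hfp'rel : ∀ y ∈ Set.Icc u v, ∀ w ∈ Set.Icc u v, fp' y - fp' w = Mk * (y - w) := by
    intro y hy w hw
    rw [hfp'aff y hy, hfp'aff w hw]; ring
  have Gcont : ContinuousOn (fun y => |fp y - fp' y|) (Set.Icc u v) :=
    (hfpc.sub hfp'c).abs
  by_cases hF : ∃ j ∈ Finset.Icc 1 (p - 1), t j ∈ Set.Ioo u v
  case neg =>
    -- no interior kink: fp = fp' on [u,v]
    push_neg at hF
    have hex : ∃ j, v ≤ t j := ⟨p, htp⟩
    set j := Nat.find hex with hjdef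
    have hjspec : v ≤ t j := Nat.find_spec hex
    have hjp : j ≤ p := Nat.find_le htp
    have hj1 : 1 ≤ j := by
      rcases Nat.eq_zero_or_pos j with h0 | h; · rw [h0] at hjspec; linarith
      · exact h
    have hjm : t (j - 1) < v := by
      have := Nat.find_min hex (show j - 1 < j by omega)
      push_neg at this; exact this
    have hju : t (j - 1) ≤ u := by
      by_contra hc
      push_neg at hc
      have hj2 : 2 ≤ j := by
        by_contra h2; have : j = 1 := by omega
        rw [this] at hc; simp at hc; linarith
      exact absurd ⟨hc, hjm⟩ (hF (j - 1) (Finset.mem_Icc.mpr ⟨by omega, by omega⟩))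
    have hsub : Set.Icc u v ⊆ Set.Icc (t (j - 1)) (t j) :=
      Set.Icc_subset_Icc hju hjspec
    have htj : t (j - 1) < t j := by
      have := htmono (j - 1) (by omega); rwa [Nat.sub_add_cancel hj1] at this
    have hdL : d = L j :=
      aux_affine_deriv_unique htj (hsub hz) (hfpaff j hj1 hjp) hdfp
    have heq : ∀ y ∈ Set.Icc u v, fp y - fp' y = 0 := by
      intro y hy
      have h1 := hfpaff j hj1 hjp y (hsub hy)
      have h2 := hfpaff j hj1 hjp z (hsub hz)
      have h3 := hfp'rel y hy z hz
      have hLM : L j = Mk := by rw [← hdL, hdM]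
      rw [hLM] at h1 h2
      linear_combination h1 - h2 - h3 + hzeq
    have : ∫ y in u..v, |fp y - fp' y| = 0 := by
      rw [intervalIntegral.integral_congr (g := fun _ => (0 : ℝ))]
      · simp
      · intro y hy
        rw [Set.uIcc_of_le huv.le] at hy
        simp [heq y hy]
    rw [this]
    positivity
  case pos =>
    obtain ⟨j0, hj0mem, hj0⟩ := hF
    rw [Finset.mem_Icc] at hj0mem
    obtain ⟨hj01, hj0p⟩ := hj0mem
    set c := t j0 with hcdef
    obtain ⟨huc, hcv⟩ := hj0
    have hcv2 : t j0 < v := hcdef ▸ hcv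
    have huc2 : u < t j0 := hcdef ▸ huc
    obtain ⟨jj, hjj⟩ := hconsec
    have meets : ∀ A B : ℝ, A < B → A < v → u < B →
        (Set.Ioo A B ∩ Set.Icc u v).Nonempty := by
      intro A B h1 h2 h3
      have hlt : max A u < min B v := lt_min (max_lt h1 h3) (max_lt h2 huv)
      refine ⟨(max A u + min B v) / 2, ⟨?_, ?_⟩, ?_, ?_⟩
      · have := le_max_left A u; linarith
      · have := min_le_left B v; linarith
      · have := le_max_right A u; linarith
      · have := min_le_right B v; linarith
    -- pieces j0 and j0+1 meet the interval
    have htj0 : t (j0 - 1) < t j0 := by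
      have := htmono (j0 - 1) (by omega)
      rwa [Nat.sub_add_cancel hj01] at this
    have hm0 : j0 = jj ∨ j0 = jj + 1 := by
      apply hjj j0 hj01 (by omega)
      exact meets (t (j0 - 1)) (t j0) htj0 (lt_trans htj0 hcv2) huc2
    have hm1 : j0 + 1 = jj ∨ j0 + 1 = jj + 1 := by
      apply hjj (j0 + 1) (by omega) (by omega)
      have : t (j0 + 1 - 1) = c := by norm_num; rfl
      rw [this]
      exact meets (t j0) (t (j0 + 1)) (htmono j0 (by omega)) hcv2 (lt_trans huc2 (htmono j0 (by omega)))
    -- left boundary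
    have hju : t (j0 - 1) ≤ u := by
      by_contra hc2
      push_neg at hc2
      have hj2 : 2 ≤ j0 := by
        by_contra h2; have : j0 = 1 := by omega
        rw [this] at hc2; simp at hc2; linarith
      have hm2 : j0 - 1 = jj ∨ j0 - 1 = jj + 1 := by
        apply hjj (j0 - 1) (by omega) (by omega)
        have h12 : t (j0 - 1 - 1) < t (j0 - 1) := by
          have := htmono (j0 - 2) (by omega)
          have e1 : j0 - 1 - 1 = j0 - 2 := by omega
          have e2 : j0 - 2 + 1 = j0 - 1 := by omega
          rw [e1]; rw [e2] at this; exact this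
        have h13 : t (j0 - 1) < v := by
          have : t (j0 - 1) ≤ c := tle _ _ (by omega) (by omega)
          linarith
        exact meets _ _ h12 (lt_trans h12 h13) hc2
      omega
    -- right boundary
    have hjv : v ≤ t (j0 + 1) := by
      by_contra hc2
      push_neg at hc2
      have hj2 : j0 + 1 < p := by
        have : t (j0 + 1) < t p := lt_of_lt_of_le hc2 htp
        by_contra hle
        have : p ≤ j0 + 1 := by omega
        have := tle p (j0 + 1) this (by omega)
        linarith
      have hm2 : j0 + 2 = jj ∨ j0 + 2 = jj + 1 := by
        apply hjj (j0 + 2) (by omega) (by omega)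
        have e1 : j0 + 2 - 1 = j0 + 1 := by omega
        rw [e1]
        have h12 : t (j0 + 1) < t (j0 + 2) := htmono (j0 + 1) (by omega)
        have h13 : u < t (j0 + 1) := by
          have : c ≤ t (j0 + 1) := tle _ _ (by omega) (by omega)
          linarith
        exact meets _ _ h12 hc2 (lt_trans h13 h12)
      omega
    -- affine forms relative to c
    have hA1 : ∀ y ∈ Set.Icc u c, fp y = fp c + L j0 * (y - c) := by
      intro y hy
      have hsub : Set.Icc u c ⊆ Set.Icc (t (j0 - 1)) (t j0) :=
        Set.Icc_subset_Icc hju le_rfl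
      have h1 := hfpaff j0 hj01 (by omega) y (hsub hy)
      have h2 := hfpaff j0 hj01 (by omega) c (hsub ⟨huc.le, le_rfl⟩)
      rw [h1, h2]; ring
    have hA2 : ∀ y ∈ Set.Icc c v, fp y = fp c + L (j0 + 1) * (y - c) := by
      intro y hy
      have e1 : t (j0 + 1 - 1) = c := by norm_num; rfl
      have h1 := hfpaff (j0 + 1) (by omega) (by omega) y (by rw [e1]; exact
        ⟨hy.1, le_trans hy.2 hjv⟩)
      rw [e1] at h1; exact h1
    set δ : ℝ := L (j0 + 1) - L j0 with hδ
    have hsum : |δ| ≤ ∑ j ∈ (Finset.Icc 1 (p - 1)).filter (fun j => t j ∈ Set.Ioo u v),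
        |L (j + 1) - L j| := by
      apply Finset.single_le_sum (f := fun j => |L (j + 1) - L j|)
        (fun i _ => abs_nonneg _)
      exact Finset.mem_filter.mpr ⟨Finset.mem_Icc.mpr ⟨hj01, hj0p⟩, ⟨huc, hcv⟩⟩
    have hmaxnn : 0 ≤ hmax := by linarith
    have int1 : IntervalIntegrable (fun y => |fp y - fp' y|) MeasureTheory.volume u c :=
      (Gcont.mono (by rw [Set.uIcc_of_le huc.le]; exact
        Set.Icc_subset_Icc le_rfl hcv.le)).intervalIntegrable
    have int2 : IntervalIntegrable (fun y => |fp y - fp' y|) MeasureTheory.volume c v :=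
      (Gcont.mono (by rw [Set.uIcc_of_le hcv.le]; exact
        Set.Icc_subset_Icc huc.le le_rfl)).intervalIntegrable
    have hsplit : ∫ y in u..v, |fp y - fp' y| =
        (∫ y in u..c, |fp y - fp' y|) + ∫ y in c..v, |fp y - fp' y| :=
      (intervalIntegral.integral_add_adjacent_intervals int1 int2).symm
    have hcmem : c ∈ Set.Icc u v := ⟨huc.le, hcv.le⟩
    -- the two symmetric cases
    rcases le_or_gt z c with hzc | hzc
    · -- z on the left: L j0 = Mk
      have hdL : d = L j0 :=
        aux_affine_deriv_unique huc ⟨hz.1, hzc⟩ hA1 hdfp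
      have hLM : L j0 = Mk := by rw [← hdL, hdM]
      have hGc : fp c = fp' c := by
        have h1 := hA1 z ⟨hz.1, hzc⟩
        have h2 := hfp'rel c hcmem z hz
        rw [hLM] at h1
        linarith
      have hleft : ∀ y ∈ Set.Icc u c, fp y - fp' y = 0 := by
        intro y hy
        have h1 := hA1 y hy
        have h2 := hfp'rel y ⟨hy.1, le_trans hy.2 hcv.le⟩ c hcmem
        rw [hLM] at h1; linarith
      have hright : ∀ y ∈ Set.Icc c v, fp y - fp' y = δ * (y - c) := by
        intro y hy
        have h1 := hA2 y hy
        have h2 := hfp'rel y ⟨le_trans huc.le hy.1, hy.2⟩ c hcmem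
        rw [hδ]
        linear_combination h1 - h2 + hGc + (y - c) * hLM
      have hI1 : ∫ y in u..c, |fp y - fp' y| = 0 := by
        rw [intervalIntegral.integral_congr (g := fun _ => (0 : ℝ))]
        · simp
        · intro y hy
          rw [Set.uIcc_of_le huc.le] at hy
          simp [hleft y hy]
      have hI2 : ∫ y in c..v, |fp y - fp' y| = |δ| * ((v - c)^2 / 2) := by
        rw [intervalIntegral.integral_congr (g := fun y => |δ| * (y - c))]
        · rw [intervalIntegral.integral_const_mul,
            intervalIntegral.integral_comp_sub_right (fun y => y) c]
          simp
        · intro y hy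
          rw [Set.uIcc_of_le hcv.le] at hy
          show |fp y - fp' y| = |δ| * (y - c)
          rw [hright y hy, abs_mul, abs_of_nonneg (by linarith [hy.1] : (0:ℝ) ≤ y - c)]
      rw [hsplit, hI1, hI2]
      have hsq : (v - c)^2 ≤ hmax^2 := by
        apply pow_le_pow_left₀ (by linarith) (by linarith)
      calc 0 + |δ| * ((v - c)^2 / 2) ≤ (1/2) * hmax^2 * |δ| := by
            rw [zero_add]
            rw [show |δ| * ((v - c)^2/2) = (1/2) * (v-c)^2 * |δ| by ring]
            apply mul_le_mul_of_nonneg_right _ (abs_nonneg _)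
            nlinarith
        _ ≤ (1/2) * hmax^2 * ∑ j ∈ (Finset.Icc 1 (p-1)).filter
              (fun j => t j ∈ Set.Ioo u v), |L (j + 1) - L j| := by
            apply mul_le_mul_of_nonneg_left hsum
            positivity
    · -- z on the right: L (j0+1) = Mk
      have hdL : d = L (j0 + 1) :=
        aux_affine_deriv_unique hcv ⟨hzc.le, hz.2⟩ hA2 hdfp
      have hLM : L (j0 + 1) = Mk := by rw [← hdL, hdM]
      have hGc : fp c = fp' c := by
        have h1 := hA2 z ⟨hzc.le, hz.2⟩
        have h2 := hfp'rel c hcmem z hz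
        rw [hLM] at h1
        linarith
      have hright : ∀ y ∈ Set.Icc c v, fp y - fp' y = 0 := by
        intro y hy
        have h1 := hA2 y hy
        have h2 := hfp'rel y ⟨le_trans huc.le hy.1, hy.2⟩ c hcmem
        rw [hLM] at h1; linarith
      have hleft : ∀ y ∈ Set.Icc u c, fp y - fp' y = (-δ) * (y - c) := by
        intro y hy
        have h1 := hA1 y hy
        have h2 := hfp'rel y ⟨hy.1, le_trans hy.2 hcv.le⟩ c hcmem
        rw [hδ]
        linear_combination h1 - h2 + hGc + (y - c) * hLM
      have hI2 : ∫ y in c..v, |fp y - fp' y| = 0 := by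
        rw [intervalIntegral.integral_congr (g := fun _ => (0 : ℝ))]
        · simp
        · intro y hy
          rw [Set.uIcc_of_le hcv.le] at hy
          simp [hright y hy]
      have hI1 : ∫ y in u..c, |fp y - fp' y| = |δ| * ((c - u)^2 / 2) := by
        rw [intervalIntegral.integral_congr (g := fun y => |δ| * (c - y))]
        · rw [intervalIntegral.integral_const_mul,
            intervalIntegral.integral_comp_sub_left (fun y => y) c]
          simp
        · intro y hy
          rw [Set.uIcc_of_le huc.le] at hy
          show |fp y - fp' y| = |δ| * (c - y)
          rw [hleft y hy]
          rw [show (-δ) * (y - c) = δ * (c - y) by ring, abs_mul,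
            abs_of_nonneg (by linarith [hy.2] : (0:ℝ) ≤ c - y)]
      rw [hsplit, hI1, hI2]
      have hsq : (c - u)^2 ≤ hmax^2 := by
        apply pow_le_pow_left₀ (by linarith) (by linarith)
      calc |δ| * ((c - u)^2 / 2) + 0 ≤ (1/2) * hmax^2 * |δ| := by
            rw [add_zero]
            rw [show |δ| * ((c - u)^2/2) = (1/2) * (c-u)^2 * |δ| by ring]
            apply mul_le_mul_of_nonneg_right _ (abs_nonneg _)
            nlinarith
        _ ≤ (1/2) * hmax^2 * ∑ j ∈ (Finset.Icc 1 (p-1)).filter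
              (fun j => t j ∈ Set.Ioo u v), |L (j + 1) - L j| := by
            apply mul_le_mul_of_nonneg_left hsum
            positivity


/-- **Theorem 2 (L¹ approximation of a piecewise linear function by a coarser
piecewise linear function).**

Let `a = x 0 < x 1 < ⋯ < x p' = b` be a partition of `[a,b]`, let `fp'` be
continuous on `[a,b]` and affine with slope `M k` on each piece
`I_k = [x (k-1), x k]` (widths `h k = x k - x (k-1)`, maximal width `hmax`).
Let `fp` be continuous piecewise linear on `[a,b]` with `p ≥ p'` pieces
determined by the partition `a = t 0 < t 1 < ⋯ < t p = b`, with slope `L j`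
on its `j`-th piece.  Assume that for every `k ∈ {1,…,p'}`:
(i) the interval `I_k` meets the interiors of at most two consecutive pieces
of `fp`, and (ii) there is a point `z ∈ I_k` at which `fp z = fp' z` and both
functions are differentiable with equal derivative.  Then
`∫_a^b |fp - fp'| ≤ (1/2) * hmax² * ∑_{k=1}^{p-1} |L (k+1) - L k|`. -/
theorem l1_error_piecewise_linear_approx
    (a b : ℝ) (p p' : ℕ) (hp'pos : 1 ≤ p') (hp'p : p' ≤ p)
    (x t : ℕ → ℝ)
    (hx0 : x 0 = a) (hxlast : x p' = b)
    (ht0 : t 0 = a) (htlast : t p = b)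
    (hxmono : ∀ k < p', x k < x (k + 1))
    (htmono : ∀ j < p, t j < t (j + 1))
    (fp fp' : ℝ → ℝ) (L M : ℕ → ℝ)
    (hfpcont : ContinuousOn fp (Set.Icc a b))
    (hfp'cont : ContinuousOn fp' (Set.Icc a b))
    -- `fp'` is affine with slope `M k` on its `k`-th piece `[x (k-1), x k]`
    (hfp'aff : ∀ k, 1 ≤ k → k ≤ p' →
      ∀ y ∈ Set.Icc (x (k - 1)) (x k),
        fp' y = fp' (x (k - 1)) + M k * (y - x (k - 1)))
    -- `fp` is affine with slope `L j` on its `j`-th piece `[t (j-1), t j]`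
    (hfpaff : ∀ j, 1 ≤ j → j ≤ p →
      ∀ y ∈ Set.Icc (t (j - 1)) (t j),
        fp y = fp (t (j - 1)) + L j * (y - t (j - 1)))
    -- widths of the pieces of `fp'` and their maximum
    (h : ℕ → ℝ) (hwidth : ∀ k, h k = x k - x (k - 1))
    (hmax : ℝ)
    (hmax_def : hmax = (Finset.Icc 1 p').sup' (Finset.nonempty_Icc.mpr hp'pos) h)
    -- (i) each `I_k` meets the interiors of at most two consecutive pieces of `fp`
    (hconsec : ∀ k, 1 ≤ k → k ≤ p' → ∃ j, ∀ m, 1 ≤ m → m ≤ p →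
      (Set.Ioo (t (m - 1)) (t m) ∩ Set.Icc (x (k - 1)) (x k)).Nonempty →
        m = j ∨ m = j + 1)
    -- (ii) on each `I_k`, `fp` and `fp'` agree in value and derivative at some point
    (htouch : ∀ k, 1 ≤ k → k ≤ p' → ∃ z ∈ Set.Icc (x (k - 1)) (x k),
      fp z = fp' z ∧ ∃ d : ℝ, HasDerivAt fp d z ∧ HasDerivAt fp' d z) :
    ∫ y in a..b, |fp y - fp' y| ≤
      (1 / 2) * hmax ^ 2 * ∑ k ∈ Finset.Icc 1 (p - 1), |L (k + 1) - L k| := by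
  classical
  have xle : ∀ i j : ℕ, i ≤ j → j ≤ p' → x i ≤ x j := by
    intro i j hij hjp
    induction j with
    | zero => exact le_of_eq (by rw [Nat.le_zero.mp hij])
    | succ n ih =>
      rcases Nat.eq_or_lt_of_le hij with hh | hh
      · exact le_of_eq (by rw [hh])
      · exact le_trans (ih (by omega) (by omega)) (hxmono n (by omega)).le
  have hsub : ∀ k < p', Set.Icc (x k) (x (k + 1)) ⊆ Set.Icc a b := by
    intro k hk
    exact Set.Icc_subset_Icc (hx0 ▸ xle 0 k (by omega) (by omega))
      (hxlast ▸ xle (k + 1) p' (by omega) le_rfl)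
  have intk : ∀ k < p', IntervalIntegrable (fun y => |fp y - fp' y|)
      MeasureTheory.volume (x k) (x (k + 1)) := by
    intro k hk
    apply ContinuousOn.intervalIntegrable
    rw [Set.uIcc_of_le (hxmono k hk).le]
    exact ((hfpcont.sub hfp'cont).abs).mono (hsub k hk)
  have hsplit : ∑ k ∈ Finset.range p', ∫ y in x k..x (k + 1), |fp y - fp' y| =
      ∫ y in a..b, |fp y - fp' y| := by
    rw [← hx0, ← hxlast]
    exact intervalIntegral.sum_integral_adjacent_intervals intk
  have hmaxnn : 0 ≤ hmax := by
    have h1 : h 1 ≤ hmax := hmax_def ▸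
      Finset.le_sup' h (Finset.mem_Icc.mpr ⟨le_rfl, hp'pos⟩)
    have := hxmono 0 (by omega)
    rw [hwidth 1] at h1
    simp at h1
    linarith
  set F : ℕ → Finset ℕ := fun k =>
    (Finset.Icc 1 (p - 1)).filter (fun j => t j ∈ Set.Ioo (x k) (x (k + 1))) with hF
  have key : ∀ k ∈ Finset.range p', ∫ y in x k..x (k + 1), |fp y - fp' y| ≤
      (1 / 2) * hmax ^ 2 * ∑ j ∈ F k, |L (j + 1) - L j| := by
    intro k hk
    rw [Finset.mem_range] at hk
    have hk1 : 1 ≤ k + 1 := by omega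
    have hk2 : k + 1 ≤ p' := by omega
    have e1 : k + 1 - 1 = k := by omega
    have a1 : t 0 ≤ x k := by rw [ht0, ← hx0]; exact xle 0 k (by omega) (by omega)
    have a2 : x (k + 1) ≤ t p := by
      rw [htlast, ← hxlast]; exact xle (k + 1) p' (by omega) le_rfl
    have a3 : ContinuousOn fp (Set.Icc (x k) (x (k + 1))) := hfpcont.mono (hsub k hk)
    have a4 : ContinuousOn fp' (Set.Icc (x k) (x (k + 1))) := hfp'cont.mono (hsub k hk)
    have a5 : ∀ y ∈ Set.Icc (x k) (x (k + 1)),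
        fp' y = fp' (x k) + M (k + 1) * (y - x k) := by
      intro y hy
      have := hfp'aff (k + 1) hk1 hk2 y (by rwa [e1])
      rwa [e1] at this
    have a6 := hconsec (k + 1) hk1 hk2
    rw [e1] at a6
    have a7 := htouch (k + 1) hk1 hk2
    rw [e1] at a7
    have a8 : x (k + 1) - x k ≤ hmax := by
      have h1 : h (k + 1) ≤ hmax := hmax_def ▸
        Finset.le_sup' h (Finset.mem_Icc.mpr ⟨hk1, hk2⟩)
      rw [hwidth (k + 1), e1] at h1
      exact h1
    exact aux_piece_bound (x k) (x (k + 1)) (hxmono k hk) p t htmono a1 a2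
      fp fp' L (M (k + 1)) a3 a4 a5 hfpaff a6 a7 hmax a8
  have hdisj : (↑(Finset.range p') : Set ℕ).PairwiseDisjoint F := by
    intro k1 hk1 k2 hk2 hne
    simp only [Finset.mem_coe, Finset.mem_range] at hk1 hk2
    rw [Function.onFun, Finset.disjoint_left]
    intro j hj1 hj2
    rw [hF] at hj1 hj2
    simp only [Finset.mem_filter, Set.mem_Ioo] at hj1 hj2
    rcases lt_or_gt_of_ne hne with hlt | hlt
    · have := xle (k1 + 1) k2 (by omega) (by omega)
      linarith [hj1.2.2, hj2.2.1]
    · have := xle (k2 + 1) k1 (by omega) (by omega)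
      linarith [hj1.2.1, hj2.2.2]
  have hsum2 : ∑ k ∈ Finset.range p', ∑ j ∈ F k, |L (j + 1) - L j| ≤
      ∑ j ∈ Finset.Icc 1 (p - 1), |L (j + 1) - L j| := by
    rw [← Finset.sum_biUnion hdisj]
    apply Finset.sum_le_sum_of_subset_of_nonneg
    · intro j hj
      rw [Finset.mem_biUnion] at hj
      obtain ⟨k, _, hjk⟩ := hj
      rw [hF] at hjk
      exact (Finset.mem_filter.mp hjk).1
    · intro _ _ _; exact abs_nonneg _
  calc ∫ y in a..b, |fp y - fp' y|
      = ∑ k ∈ Finset.range p', ∫ y in x k..x (k + 1), |fp y - fp' y| := hsplit.symm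
    _ ≤ ∑ k ∈ Finset.range p', (1 / 2) * hmax ^ 2 * ∑ j ∈ F k, |L (j + 1) - L j| :=
        Finset.sum_le_sum key
    _ = (1 / 2) * hmax ^ 2 * ∑ k ∈ Finset.range p', ∑ j ∈ F k, |L (j + 1) - L j| := by
        rw [Finset.mul_sum]
    _ ≤ (1 / 2) * hmax ^ 2 * ∑ j ∈ Finset.Icc 1 (p - 1), |L (j + 1) - L j| := by
        apply mul_le_mul_of_nonneg_left hsum2
        positivity
end

section
/- Let c ≤ t ≤ d be real numbers, let f : [c,d] → ℝ be continuous, affine with slope L on [c,t] and affine with slope L' on [t,d], and let g : [c,d] → ℝ be affine. Suppose there exists a point z ∈ [c,d] such that f(z) = g(z) and the slope of g equals the slope of the piece of f whose interval contains z. Then the L¹ error on [c,d] satisfies ∫_c^d |f(x) - g(x)| dx ≤ (1/2) · (d - c)² · |L' - L|. -/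
lemma integral_sub_self (a b : ℝ) : ∫ x in a..b, (x - a) = (b - a)^2 / 2 := by
  rw [intervalIntegral.integral_sub intervalIntegral.intervalIntegrable_id intervalIntegrable_const,
    integral_id, intervalIntegral.integral_const]
  simp [smul_eq_mul]
  ring

/-- **L¹ error bound for approximating a two-piece continuous piecewise
linear function by an affine function.**

Let `c ≤ t ≤ d`, let `f` be continuous on `[c,d]`, affine with slope `L` on
`[c,t]` and affine with slope `L'` on `[t,d]`, and let `g` be affine on
`[c,d]` with slope `Lg`.  Suppose there is a point `z ∈ [c,d]` at which
`f z = g z` and the slope of `g` equals the slope of the piece of `f` whose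
interval contains `z`.  Then
`∫_c^d |f x - g x| dx ≤ (1/2) * (d - c)² * |L' - L|`. -/
theorem l1_error_two_piece_affine
    (c t d : ℝ) (hct : c ≤ t) (htd : t ≤ d)
    (f g : ℝ → ℝ) (L L' Lg : ℝ)
    (hfcont : ContinuousOn f (Set.Icc c d))
    (hf1 : ∀ x ∈ Set.Icc c t, f x = f c + L * (x - c))
    (hf2 : ∀ x ∈ Set.Icc t d, f x = f t + L' * (x - t))
    (hg : ∀ x ∈ Set.Icc c d, g x = g c + Lg * (x - c))
    (hz : ∃ z ∈ Set.Icc c d, f z = g z ∧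
      ((z ∈ Set.Icc c t ∧ Lg = L) ∨ (z ∈ Set.Icc t d ∧ Lg = L'))) :
    ∫ x in c..d, |f x - g x| ≤ (1/2) * (d - c)^2 * |L' - L| := by
  obtain ⟨z, hzcd, hfz, hcase⟩ := hz
  have hgc : ContinuousOn g (Set.Icc c d) := by
    have : ContinuousOn (fun x => g c + Lg * (x - c)) (Set.Icc c d) :=
      (continuous_const.add (continuous_const.mul (continuous_id.sub continuous_const))).continuousOn
    exact this.congr hg
  have hFcont : ContinuousOn (fun x => |f x - g x|) (Set.Icc c d) := (hfcont.sub hgc).abs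
  have hI1 : IntervalIntegrable (fun x => |f x - g x|) MeasureTheory.volume c t :=
    (hFcont.mono (by rw [Set.uIcc_of_le hct]; exact Set.Icc_subset_Icc_right htd)).intervalIntegrable
  have hI2 : IntervalIntegrable (fun x => |f x - g x|) MeasureTheory.volume t d :=
    (hFcont.mono (by rw [Set.uIcc_of_le htd]; exact Set.Icc_subset_Icc_left hct)).intervalIntegrable
  have hsplit : ∫ x in c..d, |f x - g x| =
      (∫ x in c..t, |f x - g x|) + ∫ x in t..d, |f x - g x| :=
    (intervalIntegral.integral_add_adjacent_intervals hI1 hI2).symm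
  have hft : f t = f c + L * (t - c) := hf1 t ⟨hct, le_refl t⟩
  rcases hcase with ⟨hz1, hLg⟩ | ⟨hz2, hLg⟩
  · -- case z ∈ [c,t], Lg = L
    subst Lg
    have hfcgc : f c = g c := by
      have h1 := hf1 z hz1
      have h2 := hg z hzcd
      rw [h1, h2] at hfz; linarith
    have e1 : ∫ x in c..t, |f x - g x| = 0 := by
      have : ∀ x ∈ Set.uIcc c t, |f x - g x| = (fun _ : ℝ => (0:ℝ)) x := by
        intro x hx
        rw [Set.uIcc_of_le hct] at hx
        rw [hf1 x hx, hg x ⟨hx.1, hx.2.trans htd⟩, hfcgc]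
        simp
      rw [intervalIntegral.integral_congr this, intervalIntegral.integral_zero]
    have e2 : ∫ x in t..d, |f x - g x| = ∫ x in t..d, |L' - L| * (x - t) := by
      apply intervalIntegral.integral_congr
      intro x hx
      rw [Set.uIcc_of_le htd] at hx
      have : f x - g x = (L' - L) * (x - t) := by
        rw [hf2 x hx, hg x ⟨hct.trans hx.1, hx.2⟩, hft, hfcgc]; ring
      dsimp only; rw [this, abs_mul, abs_of_nonneg (by linarith [hx.1] : (0:ℝ) ≤ x - t)]
    rw [hsplit, e1, e2, zero_add, intervalIntegral.integral_const_mul, integral_sub_self]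
    have h1 : (d - t)^2 ≤ (d - c)^2 := by nlinarith
    nlinarith [abs_nonneg (L' - L)]
  · -- case z ∈ [t,d], Lg = L'
    subst Lg
    have hgcft : g c = f t - L' * (t - c) := by
      have h1 := hf2 z hz2
      have h2 := hg z hzcd
      rw [h1, h2] at hfz; linarith
    have e2 : ∫ x in t..d, |f x - g x| = 0 := by
      have : ∀ x ∈ Set.uIcc t d, |f x - g x| = (fun _ : ℝ => (0:ℝ)) x := by
        intro x hx
        rw [Set.uIcc_of_le htd] at hx
        rw [hf2 x hx, hg x ⟨hct.trans hx.1, hx.2⟩, hgcft]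
        simp; ring
      rw [intervalIntegral.integral_congr this, intervalIntegral.integral_zero]
    have e1 : ∫ x in c..t, |f x - g x| = ∫ x in c..t, |L' - L| * (t - x) := by
      apply intervalIntegral.integral_congr
      intro x hx
      rw [Set.uIcc_of_le hct] at hx
      have : f x - g x = (L' - L) * (t - x) := by
        rw [hf1 x hx, hg x ⟨hx.1, hx.2.trans htd⟩, hgcft, hft]; ring
      dsimp only; rw [this, abs_mul, abs_of_nonneg (by linarith [hx.2] : (0:ℝ) ≤ t - x)]
    have calc1 : ∫ x in c..t, |L' - L| * (t - x) = |L' - L| * ((t - c)^2 / 2) := by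
      rw [intervalIntegral.integral_const_mul]
      congr 1
      rw [intervalIntegral.integral_sub intervalIntegrable_const intervalIntegral.intervalIntegrable_id,
        integral_id, intervalIntegral.integral_const]
      simp [smul_eq_mul]; ring
    rw [hsplit, e2, e1, add_zero, calc1]
    have h1 : (t - c)^2 ≤ (d - c)^2 := by nlinarith
    nlinarith [abs_nonneg (L' - L)]
end
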